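/- arXiv:2005.12261 — 4 statements merged into one kernel-verified Lean document; each statement's English description precedes it below -/
import Mathlib

section
/- Let (X, μ) be a finite measure space and T a linear operator that is bounded on L²(X,μ) and maps L¹(X,μ) boundedly into weak-L¹(X,μ). Then T extends boundedly from the Zygmund space L log⁺ L(X,μ) to L¹(X,μ): there is C > 0 such that ‖Tf‖_{L¹} ≤ C‖f‖_{L log⁺ L} for all f with ∫ |f| log⁺|f| dμ < ∞. -/
open MeasureTheory ENNReal

-- L0: monotonicity of Ψ
lemma psi_mono {s s' : ℝ} (hs : 0 ≤ s) (hss : s ≤ s') :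
    s * max (Real.log s) 0 ≤ s' * max (Real.log s') 0 := by
  apply mul_le_mul hss ?_ (le_max_right _ _) (hs.trans hss)
  rcases eq_or_lt_of_le hs with h | h
  · simp [← h]
  · exact max_le_max (Real.log_le_log h hss) le_rfl

-- L1: a ≤ e + Ψ(a)
lemma le_exp_add_psi {a : ℝ} (ha : 0 ≤ a) :
    a ≤ Real.exp 1 + a * max (Real.log a) 0 := by
  rcases le_or_gt a (Real.exp 1) with h | h
  · nlinarith [mul_nonneg ha (le_max_right (Real.log a) 0)]
  · have ha' : (0:ℝ) < a := lt_trans (Real.exp_pos 1) h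
    have h1 : 1 ≤ Real.log a := by
      rw [← Real.log_exp 1]
      exact Real.log_le_log (Real.exp_pos 1) h.le
    have : a * 1 ≤ a * max (Real.log a) 0 := by
      apply mul_le_mul_of_nonneg_left _ ha
      exact le_trans h1 (le_max_left _ _)
    nlinarith [Real.exp_pos 1]

-- L2: good-part geometric sum
lemma good_sum {a : ℝ} (ha : 0 ≤ a) :
    ∑' n : ℕ, (if a ≤ 2 ^ n then ENNReal.ofReal a ^ 2 * (2⁻¹ : ℝ≥0∞) ^ n else 0)
      ≤ 2 * ENNReal.ofReal a := by
  have hex : ∃ n : ℕ, a ≤ (2:ℝ) ^ n := by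
    obtain ⟨n, hn⟩ := pow_unbounded_of_one_lt a (by norm_num : (1:ℝ) < 2)
    exact ⟨n, hn.le⟩
  set k := Nat.find hex with hk
  have hak : a ≤ (2:ℝ) ^ k := Nat.find_spec hex
  set f : ℕ → ℝ≥0∞ := fun n => if a ≤ 2 ^ n then ENNReal.ofReal a ^ 2 * (2⁻¹ : ℝ≥0∞) ^ n else 0 with hf
  have hzero : ∀ n < k, f n = 0 := by
    intro n hn
    have := Nat.find_min hex hn
    simp [hf, this]
  have hsumeq : ∑' n, f n = ∑' n, f (n + k) := by
    rw [← Summable.sum_add_tsum_nat_add' (f := f) (k := k) ENNReal.summable]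
    rw [Finset.sum_eq_zero (fun n hn => hzero n (Finset.mem_range.mp hn)), zero_add]
  have hoak : ENNReal.ofReal a ≤ 2 ^ k := by
    calc ENNReal.ofReal a ≤ ENNReal.ofReal ((2:ℝ) ^ k) := ENNReal.ofReal_le_ofReal hak
      _ = 2 ^ k := by
          rw [ENNReal.ofReal_pow (by norm_num)]
          norm_num
  rw [hsumeq]
  have hle : ∀ n : ℕ, f (n + k) ≤ (ENNReal.ofReal a ^ 2 * (2⁻¹ : ℝ≥0∞) ^ k) * (2⁻¹ : ℝ≥0∞) ^ n := by
    intro n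
    simp only [hf]
    split_ifs with h
    · rw [pow_add]; ring_nf; exact le_rfl
    · exact zero_le
  calc ∑' n, f (n + k) ≤ ∑' n : ℕ, (ENNReal.ofReal a ^ 2 * (2⁻¹ : ℝ≥0∞) ^ k) * (2⁻¹ : ℝ≥0∞) ^ n :=
        ENNReal.tsum_le_tsum hle
    _ = (ENNReal.ofReal a ^ 2 * (2⁻¹ : ℝ≥0∞) ^ k) * 2 := by
        rw [ENNReal.tsum_mul_left, ENNReal.tsum_geometric, ENNReal.one_sub_inv_two,
          inv_inv]
    _ ≤ 2 * ENNReal.ofReal a := by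
        have h1 : ENNReal.ofReal a ^ 2 ≤ 2 ^ k * ENNReal.ofReal a := by
          rw [sq]; gcongr
        have h2 : ((2:ℝ≥0∞) ^ k * ENNReal.ofReal a) * (2⁻¹ : ℝ≥0∞) ^ k = ENNReal.ofReal a := by
          rw [mul_comm ((2:ℝ≥0∞)^k), mul_assoc, ← mul_pow,
            ENNReal.mul_inv_cancel (by norm_num) (by norm_num), one_pow, mul_one]
        calc ENNReal.ofReal a ^ 2 * (2⁻¹ : ℝ≥0∞) ^ k * 2
            ≤ ((2:ℝ≥0∞) ^ k * ENNReal.ofReal a) * (2⁻¹ : ℝ≥0∞) ^ k * 2 := by gcongr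
          _ = 2 * ENNReal.ofReal a := by rw [h2, mul_comm]

-- L3: bad-part count sum
lemma bad_sum {a : ℝ} (ha : 0 ≤ a) :
    ∑' n : ℕ, (if a ≤ 2 ^ n then 0 else ENNReal.ofReal a)
      ≤ ENNReal.ofReal ((Real.log 2)⁻¹ * (a * max (Real.log a) 0) + a) := by
  have hex : ∃ n : ℕ, a ≤ (2:ℝ) ^ n := by
    obtain ⟨n, hn⟩ := pow_unbounded_of_one_lt a (by norm_num : (1:ℝ) < 2)
    exact ⟨n, hn.le⟩
  set k := Nat.find hex with hk
  have hak : a ≤ (2:ℝ) ^ k := Nat.find_spec hex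
  set f : ℕ → ℝ≥0∞ := fun n => if a ≤ 2 ^ n then 0 else ENNReal.ofReal a with hf
  have hzero : ∀ n ∉ Finset.range k, f n = 0 := by
    intro n hn
    have hkn : k ≤ n := le_of_not_gt (fun h => hn (Finset.mem_range.mpr h))
    have : a ≤ (2:ℝ) ^ n := hak.trans (pow_le_pow_right₀ (by norm_num) hkn)
    simp [hf, this]
  have hsum : ∑' n, f n = ∑ n ∈ Finset.range k, f n := tsum_eq_sum hzero
  have hterm : ∀ n ∈ Finset.range k, f n = ENNReal.ofReal a := by
    intro n hn
    have := Nat.find_min hex (Finset.mem_range.mp hn)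
    simp [hf, this]
  rw [hsum, Finset.sum_congr rfl hterm, Finset.sum_const, Finset.card_range, nsmul_eq_mul]
  -- now: (k : ℝ≥0∞) * ofReal a ≤ ofReal (...)
  have hka : ((k : ℕ) : ℝ≥0∞) * ENNReal.ofReal a = ENNReal.ofReal ((k:ℝ) * a) := by
    rw [ENNReal.ofReal_mul (Nat.cast_nonneg k), ENNReal.ofReal_natCast]
  rw [hka]
  apply ENNReal.ofReal_le_ofReal
  -- real inequality: k * a ≤ (log 2)⁻¹ * (a * log⁺ a) + a
  rcases Nat.eq_zero_or_pos k with h0 | hpos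
  · rw [h0]
    have : (0:ℝ) ≤ (Real.log 2)⁻¹ * (a * max (Real.log a) 0) :=
      mul_nonneg (inv_nonneg.mpr (Real.log_nonneg (by norm_num)))
        (mul_nonneg ha (le_max_right _ _))
    push_cast; nlinarith
  · have hklt : (2:ℝ) ^ (k - 1) < a := by
      by_contra hcon
      push_neg at hcon
      exact Nat.find_min hex (Nat.sub_lt hpos one_pos) hcon
    have ha1 : (1:ℝ) < a := lt_of_le_of_lt (one_le_pow₀ (by norm_num : (1:ℝ) ≤ 2)) hklt
    have hloga : 0 < Real.log a := Real.log_pos ha1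
    have hmax : max (Real.log a) 0 = Real.log a := max_eq_left hloga.le
    have hlog2 : (0:ℝ) < Real.log 2 := Real.log_pos (by norm_num)
    have hm : ((k:ℝ) - 1) * Real.log 2 ≤ Real.log a := by
      have := Real.log_le_log (by positivity) hklt.le
      rw [Real.log_pow] at this
      rw [Nat.cast_sub hpos] at this
      simpa using this
    have hk' : (k:ℝ) ≤ (Real.log 2)⁻¹ * Real.log a + 1 := by
      rw [← sub_le_iff_le_add, ← sub_nonneg]
      have : (Real.log 2)⁻¹ * Real.log a - ((k:ℝ) - 1)
          = (Real.log 2)⁻¹ * (Real.log a - ((k:ℝ) - 1) * Real.log 2) := by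
        field_simp
      rw [this]
      exact mul_nonneg (inv_nonneg.mpr hlog2.le) (by linarith)
    have : (k:ℝ) * a ≤ ((Real.log 2)⁻¹ * Real.log a + 1) * a :=
      mul_le_mul_of_nonneg_right hk' ha
    rw [hmax]
    nlinarith

-- L4: dyadic reconstruction
lemma dyadic_recon (y : ℝ) :
    ENNReal.ofReal y ≤ 1 + ∑' n : ℕ, (if (2:ℝ) ^ n < y then (2:ℝ≥0∞) ^ (n + 1) else 0) := by
  rcases le_or_gt y 1 with h | h
  · calc ENNReal.ofReal y ≤ ENNReal.ofReal 1 := ENNReal.ofReal_le_ofReal h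
      _ = 1 := ENNReal.ofReal_one
      _ ≤ _ := le_add_right le_rfl
  · have hex : ∃ n : ℕ, y ≤ (2:ℝ) ^ n := by
      obtain ⟨n, hn⟩ := pow_unbounded_of_one_lt y (by norm_num : (1:ℝ) < 2)
      exact ⟨n, hn.le⟩
    set k := Nat.find hex with hk
    have hyk : y ≤ (2:ℝ) ^ k := Nat.find_spec hex
    have hkpos : 0 < k := by
      rcases Nat.eq_zero_or_pos k with h0 | h1
      · exfalso; have := hyk; rw [h0] at this; simp at this; linarith
      · exact h1
    have hlt : (2:ℝ) ^ (k - 1) < y := by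
      by_contra hcon
      push_neg at hcon
      exact Nat.find_min hex (Nat.sub_lt hkpos one_pos) hcon
    have hterm : (if (2:ℝ) ^ (k-1) < y then (2:ℝ≥0∞) ^ ((k-1) + 1) else 0)
        ≤ ∑' n : ℕ, (if (2:ℝ) ^ n < y then (2:ℝ≥0∞) ^ (n + 1) else 0) :=
      ENNReal.le_tsum (k-1)
    rw [if_pos hlt, Nat.sub_add_cancel hkpos] at hterm
    have hy2k : ENNReal.ofReal y ≤ (2:ℝ≥0∞) ^ k := by
      calc ENNReal.ofReal y ≤ ENNReal.ofReal ((2:ℝ) ^ k) := ENNReal.ofReal_le_ofReal hyk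
        _ = 2 ^ k := by rw [ENNReal.ofReal_pow (by norm_num)]; norm_num
    exact le_add_left (hy2k.trans hterm)

-- L5: eLpNorm squared
lemma eLpNorm_two_sq {X : Type*} [MeasurableSpace X] (μ : Measure X) (u : X → ℝ) :
    (eLpNorm u 2 μ) ^ 2 = ∫⁻ x, (ENNReal.ofReal |u x|) ^ 2 ∂μ := by
  rw [eLpNorm_eq_lintegral_rpow_enorm_toReal (by norm_num) (by norm_num)]
  have htr : (2 : ℝ≥0∞).toReal = 2 := by norm_num
  rw [htr]
  have : ∀ x : X, ‖u x‖ₑ ^ (2:ℝ) = (ENNReal.ofReal |u x|) ^ 2 := by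
    intro x
    rw [show ‖u x‖ₑ = ENNReal.ofReal |u x| by
      rw [← ofReal_norm, Real.norm_eq_abs]]
    rw [← ENNReal.rpow_natCast]
    norm_num
  simp_rw [this]
  rw [← ENNReal.rpow_natCast _ 2, ← ENNReal.rpow_mul]
  norm_num

lemma core {X : Type*} [MeasurableSpace X] (μ : Measure X) [IsFiniteMeasure μ]
    (T : (X → ℝ) → (X → ℝ)) (hlin : IsLinearMap ℝ T)
    (hTmeas : ∀ f, Measurable f → Measurable (T f))
    (A : ℝ) (hA : 0 < A)
    (hL2 : ∀ g : X → ℝ, MemLp g 2 μ →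
      eLpNorm (T g) 2 μ ≤ ENNReal.ofReal A * eLpNorm g 2 μ)
    (B : ℝ) (hB : 0 < B)
    (hweak : ∀ g : X → ℝ, Integrable g μ → ∀ l : ℝ, 0 < l →
      ENNReal.ofReal l * μ {x | l < |T g x|} ≤ ENNReal.ofReal (B * ∫ x, |g x| ∂μ))
    (h : X → ℝ) (hm : Measurable h)
    (hΨ : ∫⁻ x, ENNReal.ofReal (|h x| * max (Real.log |h x|) 0) ∂μ ≤ 1) :
    ∫⁻ x, ENNReal.ofReal |T h x| ∂μ ≤
      μ Set.univ + 16 * ENNReal.ofReal A ^ 2 * (ENNReal.ofReal (Real.exp 1) * μ Set.univ + 1)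
      + 4 * ENNReal.ofReal B * (ENNReal.ofReal (Real.log 2)⁻¹
          + (ENNReal.ofReal (Real.exp 1) * μ Set.univ + 1)) := by
  -- L¹ bound from the Orlicz bound
  have hL1 : ∫⁻ x, ENNReal.ofReal |h x| ∂μ
      ≤ ENNReal.ofReal (Real.exp 1) * μ Set.univ + 1 := by
    calc ∫⁻ x, ENNReal.ofReal |h x| ∂μ
        ≤ ∫⁻ x, (ENNReal.ofReal (Real.exp 1)
            + ENNReal.ofReal (|h x| * max (Real.log |h x|) 0)) ∂μ := by
          apply lintegral_mono
          intro x
          show ENNReal.ofReal |h x| ≤ ENNReal.ofReal (Real.exp 1)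
              + ENNReal.ofReal (|h x| * max (Real.log |h x|) 0)
          rw [← ENNReal.ofReal_add (Real.exp_pos 1).le
            (mul_nonneg (abs_nonneg _) (le_max_right _ _))]
          exact ENNReal.ofReal_le_ofReal (le_exp_add_psi (abs_nonneg _))
      _ = ENNReal.ofReal (Real.exp 1) * μ Set.univ
            + ∫⁻ x, ENNReal.ofReal (|h x| * max (Real.log |h x|) 0) ∂μ := by
          rw [lintegral_add_left measurable_const, lintegral_const]
      _ ≤ _ := add_le_add_right hΨ _
  have hInt : Integrable h μ := by
    refine ⟨hm.aestronglyMeasurable, ?_⟩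
    rw [hasFiniteIntegral_iff_norm]
    simp_rw [Real.norm_eq_abs]
    exact lt_of_le_of_lt hL1 (by
      have := measure_lt_top μ Set.univ
      exact ENNReal.add_lt_top.mpr ⟨ENNReal.mul_lt_top ENNReal.ofReal_lt_top this, one_lt_top⟩)
  set E : ℝ≥0∞ := ENNReal.ofReal (Real.exp 1) with hE
  set A' : ℝ≥0∞ := ENNReal.ofReal A with hA'
  set B' : ℝ≥0∞ := ENNReal.ofReal B with hB'
  set G : ℕ → ℝ≥0∞ := fun n =>
    ∫⁻ x, (if |h x| ≤ 2 ^ n then (ENNReal.ofReal |h x|) ^ 2 else 0) ∂μ with hG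
  set Bad : ℕ → ℝ≥0∞ := fun n =>
    ∫⁻ x, (if |h x| ≤ 2 ^ n then 0 else ENNReal.ofReal |h x|) ∂μ with hBad
  have key : ∀ n : ℕ, (2:ℝ≥0∞) ^ (n+1) * μ {x | (2:ℝ) ^ n < |T h x|}
      ≤ 8 * (2⁻¹:ℝ≥0∞) ^ n * A' ^ 2 * G n + 4 * B' * Bad n := by
    intro n
    set l : ℝ := (2:ℝ) ^ n with hldef
    have hl1 : (1:ℝ) ≤ l := one_le_pow₀ (by norm_num)
    have hlpos : (0:ℝ) < l := lt_of_lt_of_le one_pos hl1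
    set g : X → ℝ := fun x => if |h x| ≤ l then h x else 0 with hgdef
    set b : X → ℝ := fun x => if |h x| ≤ l then 0 else h x with hbdef
    have hsetm : MeasurableSet {x | |h x| ≤ l} := measurableSet_le hm.abs measurable_const
    have hgmeas : Measurable g := Measurable.ite hsetm hm measurable_const
    have hbmeas : Measurable b := Measurable.ite hsetm measurable_const hm
    have hgb : h = g + b := by
      funext x
      simp only [hgdef, hbdef, Pi.add_apply]
      split_ifs <;> ring
    have hTsplit : ∀ x, T h x = T g x + T b x := by
      intro x
      conv_lhs => rw [hgb, hlin.map_add]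
      rfl
    have hsub : {x | l < |T h x|} ⊆ {x | l/2 < |T g x|} ∪ {x | l/2 < |T b x|} := by
      intro x hx
      simp only [Set.mem_setOf_eq] at hx
      by_contra hcon
      simp only [Set.mem_union, Set.mem_setOf_eq, not_or, not_lt] at hcon
      have := abs_add_le (T g x) (T b x)
      rw [← hTsplit x] at this
      linarith [hcon.1, hcon.2]
    have hmeas1 : MeasurableSet {x | l/2 < |T g x|} :=
      measurableSet_lt measurable_const (hTmeas g hgmeas).abs
    have hmeas2 : MeasurableSet {x | l/2 < |T b x|} :=
      measurableSet_lt measurable_const (hTmeas b hbmeas).abs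
    have hmu : μ {x | l < |T h x|} ≤ μ {x | l/2 < |T g x|} + μ {x | l/2 < |T b x|} :=
      (measure_mono hsub).trans (measure_union_le _ _)
    set c : ℝ≥0∞ := ENNReal.ofReal (l/2) with hcdef
    have hc : c = (2:ℝ≥0∞) ^ n * 2⁻¹ := by
      rw [hcdef, hldef, div_eq_mul_inv, ENNReal.ofReal_mul (by positivity),
        ENNReal.ofReal_pow (by norm_num), ENNReal.ofReal_inv_of_pos (by norm_num)]
      norm_num
    have hcinv : c⁻¹ = (2⁻¹:ℝ≥0∞) ^ n * 2 := by
      rw [hc, ENNReal.mul_inv (Or.inl (by positivity)) (Or.inl (by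
        exact pow_ne_top (by norm_num))), ENNReal.inv_pow, inv_inv]
    -- good part
    have hg2 : MemLp g 2 μ := by
      apply MemLp.of_bound hgmeas.aestronglyMeasurable l
      apply ae_of_all
      intro x
      simp only [Real.norm_eq_abs, hgdef]
      split_ifs with hx
      · exact hx
      · simpa using hlpos.le
    have cheb : c ^ 2 * μ {x | l/2 < |T g x|} ≤ ∫⁻ x, (ENNReal.ofReal |T g x|) ^ 2 ∂μ := by
      calc c ^ 2 * μ {x | l/2 < |T g x|} = ∫⁻ _ in {x | l/2 < |T g x|}, c ^ 2 ∂μ :=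
            (setLIntegral_const _ _).symm
        _ ≤ ∫⁻ x in {x | l/2 < |T g x|}, (ENNReal.ofReal |T g x|) ^ 2 ∂μ := by
            apply setLIntegral_mono ((hTmeas g hgmeas).abs.ennreal_ofReal.pow_const 2)
            intro x hx
            have : c ≤ ENNReal.ofReal |T g x| :=
              ENNReal.ofReal_le_ofReal (le_of_lt hx)
            exact pow_le_pow_left' this 2
        _ ≤ ∫⁻ x, (ENNReal.ofReal |T g x|) ^ 2 ∂μ := setLIntegral_le_lintegral _ _
    have hq : ∫⁻ x, (ENNReal.ofReal |T g x|) ^ 2 ∂μ ≤ A' ^ 2 * G n := by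
      have h1 := hL2 g hg2
      have h2 : eLpNorm (T g) 2 μ ^ 2 ≤ (ENNReal.ofReal A * eLpNorm g 2 μ) ^ 2 :=
        pow_le_pow_left' h1 2
      rw [mul_pow, eLpNorm_two_sq μ (T g), eLpNorm_two_sq μ g] at h2
      have h3 : ∫⁻ x, (ENNReal.ofReal |g x|) ^ 2 ∂μ = G n := by
        apply lintegral_congr
        intro x
        simp only [hgdef, hG]
        split_ifs <;> simp
      rw [h3] at h2
      exact h2
    have hgood : μ {x | l/2 < |T g x|} ≤ c⁻¹ ^ 2 * (A' ^ 2 * G n) := by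
      have hcne : c ≠ 0 := by
        rw [hcdef]
        simp only [ne_eq, ENNReal.ofReal_eq_zero, not_le]
        positivity
      have hcfin : c ≠ ∞ := ENNReal.ofReal_ne_top
      calc μ {x | l/2 < |T g x|} = (c ^ 2)⁻¹ * (c ^ 2 * μ {x | l/2 < |T g x|}) := by
            rw [← mul_assoc, ENNReal.inv_mul_cancel (pow_ne_zero 2 hcne)
              (pow_ne_top hcfin), one_mul]
        _ ≤ (c ^ 2)⁻¹ * (A' ^ 2 * G n) := mul_le_mul_right (cheb.trans hq) _
        _ = c⁻¹ ^ 2 * (A' ^ 2 * G n) := by rw [ENNReal.inv_pow]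
    -- bad part
    have hbint : Integrable b μ := by
      apply Integrable.mono hInt hbmeas.aestronglyMeasurable
      apply ae_of_all
      intro x
      simp only [Real.norm_eq_abs, hbdef]
      split_ifs <;> simp [abs_nonneg]
    have hw := hweak b hbint (l/2) (by positivity)
    have hBadEq : ENNReal.ofReal (B * ∫ x, |b x| ∂μ) = B' * Bad n := by
      rw [ENNReal.ofReal_mul hB.le,
        ofReal_integral_eq_lintegral_ofReal hbint.abs (ae_of_all _ fun x => abs_nonneg _)]
      congr 1
      apply lintegral_congr
      intro x
      simp only [hbdef, hBad]
      split_ifs <;> simp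
    have hbad : μ {x | l/2 < |T b x|} ≤ c⁻¹ * (B' * Bad n) := by
      have hcne : c ≠ 0 := by
        rw [hcdef]
        simp only [ne_eq, ENNReal.ofReal_eq_zero, not_le]
        positivity
      have hcfin : c ≠ ∞ := ENNReal.ofReal_ne_top
      calc μ {x | l/2 < |T b x|} = c⁻¹ * (c * μ {x | l/2 < |T b x|}) := by
            rw [← mul_assoc, ENNReal.inv_mul_cancel hcne hcfin, one_mul]
        _ ≤ c⁻¹ * (B' * Bad n) := mul_le_mul_right (hw.trans_eq hBadEq) _
    -- combine
    have hcoef1 : (2:ℝ≥0∞) ^ (n+1) * (((2⁻¹:ℝ≥0∞) ^ n * 2) ^ 2) = 8 * (2⁻¹:ℝ≥0∞) ^ n := by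
      have h2 : (2:ℝ≥0∞) ^ n * (2⁻¹:ℝ≥0∞) ^ n = 1 := by
        rw [← mul_pow, ENNReal.mul_inv_cancel (by norm_num) (by norm_num), one_pow]
      have : (2:ℝ≥0∞) ^ (n+1) * (((2⁻¹:ℝ≥0∞) ^ n * 2) ^ 2)
          = (8 * (2⁻¹:ℝ≥0∞) ^ n) * ((2:ℝ≥0∞) ^ n * (2⁻¹:ℝ≥0∞) ^ n) := by ring
      rw [this, h2, mul_one]
    have hcoef2 : (2:ℝ≥0∞) ^ (n+1) * ((2⁻¹:ℝ≥0∞) ^ n * 2) = 4 := by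
      have h2 : (2:ℝ≥0∞) ^ n * (2⁻¹:ℝ≥0∞) ^ n = 1 := by
        rw [← mul_pow, ENNReal.mul_inv_cancel (by norm_num) (by norm_num), one_pow]
      have : (2:ℝ≥0∞) ^ (n+1) * ((2⁻¹:ℝ≥0∞) ^ n * 2) = 4 * ((2:ℝ≥0∞) ^ n * (2⁻¹:ℝ≥0∞) ^ n) := by
        ring
      rw [this, h2, mul_one]
    calc (2:ℝ≥0∞) ^ (n+1) * μ {x | l < |T h x|}
        ≤ (2:ℝ≥0∞) ^ (n+1) * (c⁻¹ ^ 2 * (A' ^ 2 * G n) + c⁻¹ * (B' * Bad n)) := by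
          gcongr
          exact hmu.trans (add_le_add hgood hbad)
      _ = (2:ℝ≥0∞) ^ (n+1) * (c⁻¹ ^ 2) * (A' ^ 2 * G n)
          + (2:ℝ≥0∞) ^ (n+1) * c⁻¹ * (B' * Bad n) := by ring
      _ = 8 * (2⁻¹:ℝ≥0∞) ^ n * A' ^ 2 * G n + 4 * B' * Bad n := by
          rw [hcinv, hcoef1, hcoef2]
          ring
  have hThmeas : Measurable (T h) := hTmeas h hm
  have hsetTn : ∀ n : ℕ, MeasurableSet {x | (2:ℝ) ^ n < |T h x|} := fun n =>
    measurableSet_lt measurable_const hThmeas.abs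
  have step1 : ∫⁻ x, ENNReal.ofReal |T h x| ∂μ
      ≤ μ Set.univ + ∑' n : ℕ, (2:ℝ≥0∞) ^ (n+1) * μ {x | (2:ℝ) ^ n < |T h x|} := by
    calc ∫⁻ x, ENNReal.ofReal |T h x| ∂μ
        ≤ ∫⁻ x, (1 + ∑' n : ℕ, (if (2:ℝ) ^ n < |T h x| then (2:ℝ≥0∞) ^ (n+1) else 0)) ∂μ :=
          lintegral_mono fun x => dyadic_recon _
      _ = μ Set.univ + ∑' n : ℕ, (2:ℝ≥0∞) ^ (n+1) * μ {x | (2:ℝ) ^ n < |T h x|} := by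
          rw [lintegral_add_left measurable_const, lintegral_one]
          congr 1
          rw [lintegral_tsum (fun n =>
            (Measurable.ite (hsetTn n) measurable_const measurable_const).aemeasurable)]
          apply tsum_congr
          intro n
          have hind : (fun x => if (2:ℝ) ^ n < |T h x| then (2:ℝ≥0∞) ^ (n+1) else 0)
              = Set.indicator {x | (2:ℝ) ^ n < |T h x|} (fun _ => (2:ℝ≥0∞) ^ (n+1)) := by
            funext x
            rw [Set.indicator_apply]
            rfl
          rw [hind, lintegral_indicator (hsetTn n), setLIntegral_const]
  have sumG : ∑' n : ℕ, (2⁻¹:ℝ≥0∞) ^ n * G n ≤ 2 * (E * μ Set.univ + 1) := by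
    have hterm : ∀ n : ℕ, (2⁻¹:ℝ≥0∞) ^ n * G n
        = ∫⁻ x, (if |h x| ≤ 2 ^ n then (ENNReal.ofReal |h x|) ^ 2 * (2⁻¹:ℝ≥0∞) ^ n else 0) ∂μ := by
      intro n
      rw [hG]
      rw [← lintegral_const_mul' _ _ (pow_ne_top (by norm_num : (2⁻¹:ℝ≥0∞) ≠ ∞))]
      apply lintegral_congr
      intro x
      split_ifs <;> [ring; simp]
    have hswap : ∑' n : ℕ, (2⁻¹:ℝ≥0∞) ^ n * G n
        = ∫⁻ x, ∑' n : ℕ,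
            (if |h x| ≤ 2 ^ n then (ENNReal.ofReal |h x|) ^ 2 * (2⁻¹:ℝ≥0∞) ^ n else 0) ∂μ := by
      simp_rw [hterm]
      exact (lintegral_tsum fun n =>
        (Measurable.ite (measurableSet_le hm.abs measurable_const)
          ((hm.abs.ennreal_ofReal.pow_const 2).mul_const _) measurable_const).aemeasurable).symm
    rw [hswap]
    calc ∫⁻ x, ∑' n : ℕ,
            (if |h x| ≤ 2 ^ n then (ENNReal.ofReal |h x|) ^ 2 * (2⁻¹:ℝ≥0∞) ^ n else 0) ∂μ
        ≤ ∫⁻ x, 2 * ENNReal.ofReal |h x| ∂μ := lintegral_mono fun x => good_sum (abs_nonneg _)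
      _ = 2 * ∫⁻ x, ENNReal.ofReal |h x| ∂μ := lintegral_const_mul' _ _ (by norm_num)
      _ ≤ 2 * (E * μ Set.univ + 1) := mul_le_mul_right hL1 _
  have sumBad : ∑' n : ℕ, Bad n
      ≤ ENNReal.ofReal (Real.log 2)⁻¹ + (E * μ Set.univ + 1) := by
    have hswap : ∑' n : ℕ, Bad n
        = ∫⁻ x, ∑' n : ℕ, (if |h x| ≤ 2 ^ n then 0 else ENNReal.ofReal |h x|) ∂μ := by
      rw [hBad]
      exact (lintegral_tsum fun n =>
        (Measurable.ite (measurableSet_le hm.abs measurable_const)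
          measurable_const hm.abs.ennreal_ofReal).aemeasurable).symm
    rw [hswap]
    have hΨmeas : Measurable fun x => ENNReal.ofReal (|h x| * max (Real.log |h x|) 0) :=
      (hm.abs.mul ((Real.measurable_log.comp hm.abs).max measurable_const)).ennreal_ofReal
    calc ∫⁻ x, ∑' n : ℕ, (if |h x| ≤ 2 ^ n then 0 else ENNReal.ofReal |h x|) ∂μ
        ≤ ∫⁻ x, ENNReal.ofReal
            ((Real.log 2)⁻¹ * (|h x| * max (Real.log |h x|) 0) + |h x|) ∂μ :=
          lintegral_mono fun x => bad_sum (abs_nonneg _)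
      _ = ∫⁻ x, (ENNReal.ofReal (Real.log 2)⁻¹
            * ENNReal.ofReal (|h x| * max (Real.log |h x|) 0) + ENNReal.ofReal |h x|) ∂μ := by
          apply lintegral_congr
          intro x
          rw [ENNReal.ofReal_add (by positivity) (abs_nonneg _), ENNReal.ofReal_mul (by positivity)]
      _ = ENNReal.ofReal (Real.log 2)⁻¹
            * ∫⁻ x, ENNReal.ofReal (|h x| * max (Real.log |h x|) 0) ∂μ
            + ∫⁻ x, ENNReal.ofReal |h x| ∂μ := by
          rw [lintegral_add_left (hΨmeas.const_mul _),
            lintegral_const_mul' _ _ ENNReal.ofReal_ne_top]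
      _ ≤ ENNReal.ofReal (Real.log 2)⁻¹ * 1 + (E * μ Set.univ + 1) :=
          add_le_add (mul_le_mul_right hΨ _) hL1
      _ = ENNReal.ofReal (Real.log 2)⁻¹ + (E * μ Set.univ + 1) := by rw [mul_one]
  calc ∫⁻ x, ENNReal.ofReal |T h x| ∂μ
      ≤ μ Set.univ + ∑' n : ℕ, (2:ℝ≥0∞) ^ (n+1) * μ {x | (2:ℝ) ^ n < |T h x|} := step1
    _ ≤ μ Set.univ + ∑' n : ℕ, (8 * (2⁻¹:ℝ≥0∞) ^ n * A' ^ 2 * G n + 4 * B' * Bad n) :=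
        add_le_add_right (ENNReal.tsum_le_tsum key) _
    _ = μ Set.univ + ((8 * A' ^ 2) * ∑' n : ℕ, (2⁻¹:ℝ≥0∞) ^ n * G n
          + (4 * B') * ∑' n : ℕ, Bad n) := by
        rw [ENNReal.tsum_add]
        congr 1
        congr 1
        · rw [← ENNReal.tsum_mul_left]
          apply tsum_congr
          intro n
          ring
        · rw [← ENNReal.tsum_mul_left]
    _ ≤ μ Set.univ + ((8 * A' ^ 2) * (2 * (E * μ Set.univ + 1))
          + (4 * B') * (ENNReal.ofReal (Real.log 2)⁻¹ + (E * μ Set.univ + 1))) := by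
        gcongr
    _ = μ Set.univ + 16 * A' ^ 2 * (E * μ Set.univ + 1)
          + 4 * B' * (ENNReal.ofReal (Real.log 2)⁻¹ + (E * μ Set.univ + 1)) := by
        ring

/-- Zygmund inequality: L² boundedness plus weak-type (1,1) imply
L log⁺ L → L¹ boundedness on a finite measure space; the L log⁺ L norm is
the Luxemburg norm for the Young function Ψ(t) = t·log⁺ t. -/
theorem stmt1 {X : Type*} [MeasurableSpace X] (μ : Measure X) [IsFiniteMeasure μ]
    (T : (X → ℝ) → (X → ℝ)) (hlin : IsLinearMap ℝ T)
    (hTmeas : ∀ f, Measurable f → Measurable (T f))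
    (A : ℝ) (hA : 0 < A)
    (hL2 : ∀ g : X → ℝ, MemLp g 2 μ →
      eLpNorm (T g) 2 μ ≤ ENNReal.ofReal A * eLpNorm g 2 μ)
    (B : ℝ) (hB : 0 < B)
    (hweak : ∀ g : X → ℝ, Integrable g μ → ∀ l : ℝ, 0 < l →
      ENNReal.ofReal l * μ {x | l < |T g x|} ≤ ENNReal.ofReal (B * ∫ x, |g x| ∂μ)) :
    ∃ C : ℝ, 0 < C ∧ ∀ f : X → ℝ, Measurable f →
      (∫⁻ x, ENNReal.ofReal (|f x| * max (Real.log |f x|) 0) ∂μ) < ∞ →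
      ∫⁻ x, ENNReal.ofReal |T f x| ∂μ ≤ ENNReal.ofReal (C *
        sInf {t : ℝ | 0 < t ∧
          ∫⁻ x, ENNReal.ofReal ((|f x| / t) * max (Real.log (|f x| / t)) 0) ∂μ ≤ 1}) := by
  set K : ℝ≥0∞ := μ Set.univ
      + 16 * ENNReal.ofReal A ^ 2 * (ENNReal.ofReal (Real.exp 1) * μ Set.univ + 1)
      + 4 * ENNReal.ofReal B * (ENNReal.ofReal (Real.log 2)⁻¹
          + (ENNReal.ofReal (Real.exp 1) * μ Set.univ + 1)) with hK
  have hKfin : K ≠ ∞ := by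
    rw [hK]
    have hμ : μ Set.univ ≠ ∞ := measure_ne_top μ _
    refine ENNReal.add_ne_top.mpr ⟨ENNReal.add_ne_top.mpr ⟨hμ, ?_⟩, ?_⟩
    · exact ENNReal.mul_ne_top (ENNReal.mul_ne_top (by norm_num)
        (by exact pow_ne_top ENNReal.ofReal_ne_top))
        (ENNReal.add_ne_top.mpr ⟨ENNReal.mul_ne_top ENNReal.ofReal_ne_top hμ, by norm_num⟩)
    · exact ENNReal.mul_ne_top (ENNReal.mul_ne_top (by norm_num) ENNReal.ofReal_ne_top)
        (ENNReal.add_ne_top.mpr ⟨ENNReal.ofReal_ne_top,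
          ENNReal.add_ne_top.mpr ⟨ENNReal.mul_ne_top ENNReal.ofReal_ne_top hμ, by norm_num⟩⟩)
  set C : ℝ := K.toReal + 1 with hC
  have hCpos : 0 < C := by
    have := ENNReal.toReal_nonneg (a := K)
    rw [hC]; linarith
  refine ⟨C, hCpos, ?_⟩
  intro f hfmeas hfin
  set S := {t : ℝ | 0 < t ∧
    ∫⁻ x, ENNReal.ofReal ((|f x| / t) * max (Real.log (|f x| / t)) 0) ∂μ ≤ 1} with hS
  -- S is nonempty
  set I := ∫⁻ x, ENNReal.ofReal (|f x| * max (Real.log |f x|) 0) ∂μ with hI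
  have hSne : S.Nonempty := by
    set t : ℝ := max 1 I.toReal with ht
    have ht1 : (1:ℝ) ≤ t := le_max_left _ _
    have htpos : (0:ℝ) < t := lt_of_lt_of_le one_pos ht1
    refine ⟨t, htpos, ?_⟩
    have hpt : ∀ x, ENNReal.ofReal ((|f x| / t) * max (Real.log (|f x| / t)) 0)
        ≤ ENNReal.ofReal t⁻¹ * ENNReal.ofReal (|f x| * max (Real.log |f x|) 0) := by
      intro x
      rw [← ENNReal.ofReal_mul (by positivity)]
      apply ENNReal.ofReal_le_ofReal
      have hlog : max (Real.log (|f x| / t)) 0 ≤ max (Real.log |f x|) 0 := by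
        rcases eq_or_lt_of_le (abs_nonneg (f x)) with h0 | h0
        · rw [← h0]; simp
        · exact max_le_max (Real.log_le_log (by positivity) (div_le_self (abs_nonneg _) ht1))
            le_rfl
      calc (|f x| / t) * max (Real.log (|f x| / t)) 0
          ≤ (|f x| / t) * max (Real.log |f x|) 0 :=
            mul_le_mul_of_nonneg_left hlog (by positivity)
        _ = t⁻¹ * (|f x| * max (Real.log |f x|) 0) := by ring
    calc ∫⁻ x, ENNReal.ofReal ((|f x| / t) * max (Real.log (|f x| / t)) 0) ∂μ
        ≤ ∫⁻ x, ENNReal.ofReal t⁻¹ * ENNReal.ofReal (|f x| * max (Real.log |f x|) 0) ∂μ :=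
          lintegral_mono hpt
      _ = ENNReal.ofReal t⁻¹ * I := lintegral_const_mul' _ _ ENNReal.ofReal_ne_top
      _ ≤ ENNReal.ofReal t⁻¹ * ENNReal.ofReal t := by
          apply mul_le_mul_right
          calc I = ENNReal.ofReal I.toReal := (ENNReal.ofReal_toReal hfin.ne).symm
            _ ≤ ENNReal.ofReal t := ENNReal.ofReal_le_ofReal (le_max_right _ _)
      _ = 1 := by
          rw [← ENNReal.ofReal_mul (by positivity), inv_mul_cancel₀ (ne_of_gt htpos),
            ENNReal.ofReal_one]
  have ht0 : 0 ≤ sInf S := le_csInf hSne fun t ht => ht.1.le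
  -- bound for each t ∈ S
  have hbound : ∀ t ∈ S, ∫⁻ x, ENNReal.ofReal |T f x| ∂μ ≤ ENNReal.ofReal (C * t) := by
    intro t ht
    obtain ⟨htpos, htint⟩ := ht
    set h : X → ℝ := fun x => f x / t with hh
    have hhm : Measurable h := hfmeas.div_const t
    have habs : ∀ x, |h x| = |f x| / t := fun x => by
      rw [hh]; simp only []; rw [abs_div, abs_of_pos htpos]
    have hΨh : ∫⁻ x, ENNReal.ofReal (|h x| * max (Real.log |h x|) 0) ∂μ ≤ 1 := by
      simp_rw [habs]; exact htint
    have hcore := core μ T hlin hTmeas A hA hL2 B hB hweak h hhm hΨh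
    have hTrel : ∀ x, |T f x| = t * |T h x| := by
      have h1 : h = t⁻¹ • f := by
        funext x
        rw [hh]; simp only [Pi.smul_apply, smul_eq_mul]; ring
      have h2 : T h = t⁻¹ • T f := by rw [h1, hlin.map_smul]
      intro x
      have h3 : T h x = t⁻¹ * T f x := by rw [h2]; rfl
      have h4 : T f x = t * T h x := by
        rw [h3, ← mul_assoc, mul_inv_cancel₀ (ne_of_gt htpos), one_mul]
      rw [h4, abs_mul, abs_of_pos htpos]
    calc ∫⁻ x, ENNReal.ofReal |T f x| ∂μ
        = ∫⁻ x, ENNReal.ofReal t * ENNReal.ofReal |T h x| ∂μ := by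
          apply lintegral_congr
          intro x
          rw [hTrel x, ENNReal.ofReal_mul htpos.le]
      _ = ENNReal.ofReal t * ∫⁻ x, ENNReal.ofReal |T h x| ∂μ :=
          lintegral_const_mul' _ _ ENNReal.ofReal_ne_top
      _ ≤ ENNReal.ofReal t * K := mul_le_mul_right hcore _
      _ = ENNReal.ofReal t * ENNReal.ofReal K.toReal := by rw [ENNReal.ofReal_toReal hKfin]
      _ = ENNReal.ofReal (t * K.toReal) := (ENNReal.ofReal_mul htpos.le).symm
      _ ≤ ENNReal.ofReal (C * t) := by
          apply ENNReal.ofReal_le_ofReal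
          have := ENNReal.toReal_nonneg (a := K)
          nlinarith
  -- upward closed
  have hup : ∀ t ∈ S, ∀ t', t ≤ t' → t' ∈ S := by
    intro t ht t' htt'
    obtain ⟨htpos, htint⟩ := ht
    have ht'pos : 0 < t' := lt_of_lt_of_le htpos htt'
    refine ⟨ht'pos, ?_⟩
    refine le_trans (lintegral_mono fun x => ?_) htint
    apply ENNReal.ofReal_le_ofReal
    exact psi_mono (div_nonneg (abs_nonneg _) ht'pos.le)
      (div_le_div_of_nonneg_left (abs_nonneg _) htpos htt')
  -- conclude
  apply ENNReal.le_of_forall_pos_le_add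
  intro ε hε _
  have hεR : (0:ℝ) < (ε:ℝ) := hε
  set t' : ℝ := sInf S + (ε:ℝ) / C with ht'
  have ht'S : t' ∈ S := by
    have hlt : sInf S < t' := by
      rw [ht']
      exact lt_add_of_pos_right _ (by positivity)
    obtain ⟨s, hs, hst⟩ := exists_lt_of_csInf_lt hSne hlt
    exact hup s hs t' hst.le
  calc ∫⁻ x, ENNReal.ofReal |T f x| ∂μ ≤ ENNReal.ofReal (C * t') := hbound t' ht'S
    _ = ENNReal.ofReal (C * sInf S + (ε:ℝ)) := by
        rw [ht', mul_add, mul_div_cancel₀ _ (ne_of_gt hCpos)]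
    _ = ENNReal.ofReal (C * sInf S) + ENNReal.ofReal (ε:ℝ) :=
        ENNReal.ofReal_add (mul_nonneg hCpos.le ht0) hεR.le
    _ = ENNReal.ofReal (C * sInf S) + ε := by rw [ENNReal.ofReal_coe_nnreal]
end

section
/- Let (X, μ) be a positive measure space and k : X × X → ℝ a measurable kernel with M := ‖∫_X k(x, ·) dμ(x)‖_{L^∞(X,μ)} < ∞ (i.e., the function y ↦ ∫|k(x,y)| dμ(x) is essentially bounded). If the family {k_y : y ∈ X}, where k_y(x) = k(x,y), is relatively compact in L¹(X,μ), then the integral operator Kf(x) = ∫_X k(x,y) f(y) dμ(y) is a compact operator on L¹(X,μ). -/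
open MeasureTheory ENNReal
open Set TopologicalSpace Filter
open scoped NNReal

section aux
variable {X : Type*} [MeasurableSpace X] {μ : Measure X}

lemma aux_sfinite_iUnion {ι : Type*} [Countable ι] (s : ι → Set X)
    (h : ∀ i, SFinite (μ.restrict (s i))) : SFinite (μ.restrict (⋃ i, s i)) := by
  haveI := h
  exact sFinite_of_absolutelyContinuous (ν := Measure.sum fun i => μ.restrict (s i))
    (Measure.absolutelyContinuous_of_le Measure.restrict_iUnion_le)

lemma aux_sfinite_union {s t : Set X}
    (hs : SFinite (μ.restrict s)) (ht : SFinite (μ.restrict t)) :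
    SFinite (μ.restrict (s ∪ t)) := by
  haveI := hs; haveI := ht
  exact sFinite_of_absolutelyContinuous (ν := μ.restrict s + μ.restrict t)
    (Measure.absolutelyContinuous_of_le (Measure.restrict_union_le _ _))

lemma aux_coeFn_sum {ι : Type*} (s : Finset ι) (f : ι → Lp ℝ 1 μ) :
    ⇑(∑ i ∈ s, f i) =ᵐ[μ] fun x => ∑ i ∈ s, f i x := by
  classical
  induction s using Finset.induction_on with
  | empty => simp only [Finset.sum_empty]; exact Lp.coeFn_zero ℝ 1 μ
  | insert a s' hij ih =>
      have hs : (∑ i ∈ insert a s', f i) = f a + ∑ i ∈ s', f i := Finset.sum_insert hij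
      rw [hs]
      filter_upwards [Lp.coeFn_add (f a) (∑ i ∈ s', f i), ih] with x h1 h2
      rw [h1, Pi.add_apply, h2, Finset.sum_insert hij]

lemma aux_isCompactOperator_smulRight {E F : Type*} [NormedAddCommGroup E] [NormedSpace ℝ E]
    [NormedAddCommGroup F] [NormedSpace ℝ F] (φ : E →L[ℝ] ℝ) (g : F) :
    IsCompactOperator (φ.smulRight g) := by
  rw [isCompactOperator_iff_exists_mem_nhds_image_subset_compact]
  refine ⟨Metric.ball 0 1, Metric.ball_mem_nhds _ one_pos,
    (fun c : ℝ => c • g) '' Metric.closedBall 0 (‖φ‖ + 1),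
    (isCompact_closedBall _ _).image (continuous_id.smul continuous_const), ?_⟩
  rintro - ⟨x, hx, rfl⟩
  refine ⟨φ x, ?_, rfl⟩
  simp only [Metric.mem_closedBall, dist_zero_right]
  calc ‖φ x‖ ≤ ‖φ‖ * ‖x‖ := φ.le_opNorm x
  _ ≤ ‖φ‖ * 1 := mul_le_mul_of_nonneg_left
      (le_of_lt (by simpa [dist_zero_right] using hx)) (norm_nonneg _)
  _ ≤ ‖φ‖ + 1 := by linarith [norm_nonneg φ]

lemma aux_isCompactOperator_sum {ι E F : Type*} [NormedAddCommGroup E] [NormedSpace ℝ E]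
    [NormedAddCommGroup F] [NormedSpace ℝ F] (s : Finset ι) (G : ι → E →L[ℝ] F)
    (h : ∀ i, IsCompactOperator (G i)) : IsCompactOperator (⇑(∑ i ∈ s, G i)) := by
  classical
  induction s using Finset.induction_on with
  | empty => simpa using isCompactOperator_zero
  | insert a s' hij ih =>
      rw [Finset.sum_insert hij]
      exact (h a).add ih

/-- Integration over a set as a continuous linear functional on `L¹`. -/
noncomputable def auxSetIntegralCLM (A : Set X) : Lp ℝ 1 μ →L[ℝ] ℝ :=
  LinearMap.mkContinuous
    { toFun := fun f => ∫ y in A, f y ∂μ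
      map_add' := by
        intro f g
        rw [← integral_add ((L1.integrable_coeFn f).integrableOn)
          ((L1.integrable_coeFn g).integrableOn)]
        exact integral_congr_ae (ae_restrict_of_ae ((Lp.coeFn_add f g).mono
          (fun x hx => by simpa using hx)))
      map_smul' := by
        intro c f
        rw [RingHom.id_apply, ← integral_smul]
        exact integral_congr_ae (ae_restrict_of_ae ((Lp.coeFn_smul c f).mono
          (fun x hx => by simpa using hx))) } 1
    (by
      intro f
      rw [one_mul]
      calc ‖∫ y in A, f y ∂μ‖ ≤ ∫ y in A, ‖f y‖ ∂μ := norm_integral_le_integral_norm _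
      _ ≤ ∫ y, ‖f y‖ ∂μ := setIntegral_le_integral ((L1.integrable_coeFn f).norm)
          (Filter.Eventually.of_forall fun x => norm_nonneg _)
      _ = ‖f‖ := (L1.norm_eq_integral_norm f).symm)

lemma auxSetIntegralCLM_apply (A : Set X) (f : Lp ℝ 1 μ) :
    auxSetIntegralCLM A f = ∫ y in A, f y ∂μ := rfl

end aux

set_option synthInstance.maxHeartbeats 400000 in
set_option maxHeartbeats 1000000 in
lemma aux_approx {X : Type*} [MeasurableSpace X] (μ : Measure X)
    (k : X → X → ℝ) (hk : Measurable (Function.uncurry k))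
    (hky : ∀ y : X, MemLp (fun x => k x y) 1 μ)
    (hcpt : IsCompact (closure {g : Lp ℝ 1 μ | ∃ y : X, (hky y).toLp (fun x => k x y) = g}))
    (T : Lp ℝ 1 μ →L[ℝ] Lp ℝ 1 μ)
    (hT : ∀ f : Lp ℝ 1 μ, (T f : X → ℝ) =ᵐ[μ] fun x => ∫ y, k x y * f y ∂μ)
    {ε : ℝ} (hε : 0 < ε) :
    ∃ S : Lp ℝ 1 μ →L[ℝ] Lp ℝ 1 μ, IsCompactOperator S ∧ ∀ f, ‖T f - S f‖ ≤ ε * ‖f‖ := by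
  classical
  set Φ : X → Lp ℝ 1 μ := fun y => (hky y).toLp (fun x => k x y) with hΦdef
  set S₀ : Set (Lp ℝ 1 μ) := {g | ∃ y : X, Φ y = g} with hS₀def
  -- a σ-finite "support" set E for the whole family
  have hsep : IsSeparable S₀ := hcpt.isSeparable.mono subset_closure
  obtain ⟨c, hc_sub, hc_cnt, hc_dense⟩ := hsep.exists_countable_dense_subset
  obtain ⟨h, hh⟩ : ∃ h : ℕ → Lp ℝ 1 μ, insert 0 c = Set.range h :=
    Set.Countable.exists_eq_range (hc_cnt.insert 0) (insert_nonempty _ _)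
  choose t ht_meas hzero hsig using fun n =>
    ((L1.integrable_coeFn (h n)).aefinStronglyMeasurable).exists_set_sigmaFinite
  set E : Set X := ⋃ n, t n with hEdef
  have hE_meas : MeasurableSet E := MeasurableSet.iUnion ht_meas
  haveI hE_sf : SFinite (μ.restrict E) :=
    aux_sfinite_iUnion t (fun n => by haveI := hsig n; infer_instance)
  have hΦae : ∀ y, ⇑(Φ y) =ᵐ[μ] fun x => k x y := fun y => (hky y).coeFn_toLp
  have hvanish : ∀ y : X, ∫⁻ x in Eᶜ, ‖k x y‖₊ ∂μ = 0 := by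
    have hvan0 : ∀ m : ℕ, ∫⁻ x in Eᶜ, ‖h m x‖₊ ∂μ = 0 := by
      intro m
      have hsub : Eᶜ ⊆ (t m)ᶜ := compl_subset_compl.2 (hEdef ▸ subset_iUnion t m)
      have h0 : ⇑(h m) =ᵐ[μ.restrict Eᶜ] 0 :=
        ae_restrict_of_ae_restrict_of_subset hsub (hzero m)
      calc ∫⁻ x in Eᶜ, ‖h m x‖₊ ∂μ = ∫⁻ _ in Eᶜ, 0 ∂μ := by
            refine lintegral_congr_ae ?_
            filter_upwards [h0] with x hx
            simp [hx]
      _ = 0 := lintegral_zero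
    intro y
    refine le_antisymm ?_ zero_le
    have hkey : ∀ δ : NNReal, 0 < δ → ∫⁻ x in Eᶜ, ‖k x y‖₊ ∂μ ≤ δ := by
      intro δ hδ
      have hmemc : Φ y ∈ closure (insert 0 c) :=
        closure_mono (subset_insert _ _) (hc_dense ⟨y, rfl⟩)
      obtain ⟨g, hg_mem, hg_dist⟩ := Metric.mem_closure_iff.mp hmemc δ hδ
      obtain ⟨m, rfl⟩ : ∃ m, h m = g := by
        have := hh ▸ hg_mem
        obtain ⟨m, hm⟩ := this
        exact ⟨m, hm⟩
      calc ∫⁻ x in Eᶜ, ‖k x y‖₊ ∂μ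
          ≤ ∫⁻ x in Eᶜ, ((‖k x y - h m x‖₊ : ℝ≥0∞) + ‖h m x‖₊) ∂μ := by
            refine lintegral_mono fun x => ?_
            have : (‖k x y‖₊ : ℝ≥0∞) ≤ ‖k x y - h m x‖₊ + ‖h m x‖₊ := by
              have h2 := nnnorm_add_le (k x y - h m x) (h m x)
              simp only [sub_add_cancel] at h2
              exact_mod_cast h2
            exact this
      _ = ∫⁻ x in Eᶜ, (‖k x y - h m x‖₊ : ℝ≥0∞) ∂μ + ∫⁻ x in Eᶜ, (‖h m x‖₊ : ℝ≥0∞) ∂μ :=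
            lintegral_add_right' _ ((Lp.aestronglyMeasurable (h m)).restrict.enorm)
      _ = ∫⁻ x in Eᶜ, (‖k x y - h m x‖₊ : ℝ≥0∞) ∂μ := by rw [hvan0 m, add_zero]
      _ ≤ ∫⁻ x, (‖k x y - h m x‖₊ : ℝ≥0∞) ∂μ := setLIntegral_le_lintegral _ _
      _ = eLpNorm (fun x => k x y - h m x) 1 μ := by
            rw [eLpNorm_one_eq_lintegral_enorm]; rfl
      _ = eLpNorm (⇑(Φ y) - ⇑(h m)) 1 μ := by
            refine eLpNorm_congr_ae ?_
            filter_upwards [hΦae y] with x hx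
            simp [hx]
      _ = edist (Φ y) (h m) := (Lp.edist_def _ _).symm
      _ ≤ δ := by
            rw [edist_dist]
            calc ENNReal.ofReal (dist (Φ y) (h m)) ≤ ENNReal.ofReal δ :=
                  ENNReal.ofReal_le_ofReal hg_dist.le
            _ = δ := ENNReal.ofReal_coe_nnreal
    refine ENNReal.le_of_forall_pos_le_add fun δ hδ _ => ?_
    simpa using hkey δ hδ
  -- the ε-net
  have htb : TotallyBounded S₀ := hcpt.totallyBounded.subset subset_closure
  obtain ⟨s, hs_sub, hs_fin, hs_cover⟩ := totallyBounded_iff_subset.mp htb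
    {p | dist p.1 p.2 < ε} (Metric.dist_mem_uniformity hε)
  haveI := hs_fin.fintype
  set n := Fintype.card s with hn
  set eqv : s ≃ Fin n := Fintype.equivFin s with heqv
  choose ys hys using fun g : s => hs_sub g.2
  set e : Fin n → X := fun i => ys (eqv.symm i) with hedef
  -- distances
  set d : Fin n → X → ℝ≥0∞ :=
    fun i y => ∫⁻ x in E, ‖k x y - k x (e i)‖₊ ∂μ with hddef
  have hd_meas : ∀ i, Measurable (d i) := by
    intro i
    have : Measurable (Function.uncurry fun y x => ((‖k x y - k x (e i)‖₊ : ℝ≥0∞))) :=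
      ((hk.comp measurable_swap).sub
        (hk.comp ((measurable_snd).prodMk measurable_const))).enorm
    exact this.lintegral_prod_right'
  have hd_eq : ∀ i y, ∫⁻ x, ‖k x y - k x (e i)‖₊ ∂μ = d i y := by
    intro i y
    simp only [hddef]
    rw [← lintegral_add_compl (fun x => (‖k x y - k x (e i)‖₊ : ℝ≥0∞)) hE_meas]
    have hc0 : ∫⁻ x in Eᶜ, (‖k x y - k x (e i)‖₊ : ℝ≥0∞) ∂μ = 0 := by
      refine le_antisymm ?_ zero_le
      have hmx : ∀ z : X, Measurable fun x => (‖k x z‖₊ : ℝ≥0∞) :=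
        fun z => (hk.comp (measurable_id.prodMk measurable_const)).enorm
      calc ∫⁻ x in Eᶜ, (‖k x y - k x (e i)‖₊ : ℝ≥0∞) ∂μ
          ≤ ∫⁻ x in Eᶜ, ((‖k x y‖₊ : ℝ≥0∞) + ‖k x (e i)‖₊) ∂μ := by
            refine lintegral_mono fun x => ?_
            calc (‖k x y - k x (e i)‖₊ : ℝ≥0∞)
                ≤ ((‖k x y‖₊ + ‖k x (e i)‖₊ : NNReal) : ℝ≥0∞) :=
                  ENNReal.coe_le_coe.mpr (nnnorm_sub_le _ _)
            _ = (‖k x y‖₊ : ℝ≥0∞) + ‖k x (e i)‖₊ := ENNReal.coe_add _ _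
      _ = ∫⁻ x in Eᶜ, (‖k x y‖₊ : ℝ≥0∞) ∂μ + ∫⁻ x in Eᶜ, (‖k x (e i)‖₊ : ℝ≥0∞) ∂μ :=
            lintegral_add_left (hmx y) _
      _ = 0 := by rw [hvanish y, hvanish (e i), add_zero]
    rw [hc0, add_zero]
  have hcov : ∀ y, ∃ i, dist (Φ y) (Φ (e i)) < ε := by
    intro y
    have := hs_cover (show Φ y ∈ S₀ from ⟨y, rfl⟩)
    simp only [Set.mem_iUnion, Set.mem_setOf_eq] at this
    obtain ⟨g, hg, hdist⟩ := this
    refine ⟨eqv ⟨g, hg⟩, ?_⟩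
    have hge : Φ (e (eqv ⟨g, hg⟩)) = g := by
      simp only [hedef, Equiv.symm_apply_apply]
      exact hys ⟨g, hg⟩
    exact (congrArg (dist (Φ y)) hge).trans_lt hdist
  have hd_lt : ∀ y, ∃ i, d i y < ENNReal.ofReal ε := by
    intro y
    obtain ⟨i, hi⟩ := hcov y
    refine ⟨i, ?_⟩
    calc d i y ≤ ∫⁻ x, ‖k x y - k x (e i)‖₊ ∂μ := by
          simp only [hddef]
          exact setLIntegral_le_lintegral _ _
    _ = eLpNorm (fun x => k x y - k x (e i)) 1 μ := by rw [eLpNorm_one_eq_lintegral_enorm]; rfl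
    _ = eLpNorm (⇑(Φ y) - ⇑(Φ (e i))) 1 μ := by
          refine eLpNorm_congr_ae ?_
          filter_upwards [hΦae y, hΦae (e i)] with x h1 h2
          simp [h1, h2]
    _ = edist (Φ y) (Φ (e i)) := (Lp.edist_def _ _).symm
    _ < ENNReal.ofReal ε := by
          rw [edist_dist]
          exact (ENNReal.ofReal_lt_ofReal_iff hε).mpr hi
  -- the partition
  set A : Fin n → Set X := fun i =>
    {y | d i y < ENNReal.ofReal ε} ∩ ⋂ (j : Fin n) (_ : j < i),
      {y | d j y < ENNReal.ofReal ε}ᶜ with hAdef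
  have hA_meas : ∀ i, MeasurableSet (A i) := by
    intro i
    exact (((hd_meas i) measurableSet_Iio).inter (MeasurableSet.iInter fun j =>
      MeasurableSet.iInter fun _ => ((hd_meas j) measurableSet_Iio).compl))
  have hA_lt : ∀ i y, y ∈ A i → d i y < ENNReal.ofReal ε := fun i y hy => hy.1
  have hA_cover : ∀ y, ∃ i, y ∈ A i := by
    intro y
    obtain ⟨i₀, hi₀⟩ := hd_lt y
    have hne : (Finset.univ.filter fun j => d j y < ENNReal.ofReal ε).Nonempty :=
      ⟨i₀, by simpa using hi₀⟩
    refine ⟨(Finset.univ.filter fun j => d j y < ENNReal.ofReal ε).min' hne, ?_⟩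
    constructor
    · have := (Finset.univ.filter fun j => d j y < ENNReal.ofReal ε).min'_mem hne
      simpa using this
    · simp only [Set.mem_iInter, Set.mem_compl_iff, Set.mem_setOf_eq]
      intro j hj hjy
      exact absurd (Finset.min'_le _ j (by simpa using hjy)) (not_le.mpr hj)
  have hA_unique : ∀ y i j, y ∈ A i → y ∈ A j → i = j := by
    intro y i j hi hj
    by_contra hne
    rcases lt_or_gt_of_ne hne with hlt | hlt
    · exact (Set.mem_iInter.mp (Set.mem_iInter.mp hj.2 i) hlt) hi.1
    · exact (Set.mem_iInter.mp (Set.mem_iInter.mp hi.2 j) hlt) hj.1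
  -- the finite-rank operator
  set S : Lp ℝ 1 μ →L[ℝ] Lp ℝ 1 μ :=
    ∑ i : Fin n, (auxSetIntegralCLM (A i)).smulRight (Φ (e i)) with hSdef
  refine ⟨S, aux_isCompactOperator_sum _ _
    (fun i => aux_isCompactOperator_smulRight _ _), ?_⟩
  intro f
  have hΦ : ∀ y, ⇑(Φ y) =ᵐ[μ] fun x => k x y := hΦae
  have hSapp : S f = ∑ i : Fin n, (∫ y in A i, f y ∂μ) • Φ (e i) := by
    rw [hSdef]
    simp only [ContinuousLinearMap.sum_apply, ContinuousLinearMap.smulRight_apply,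
      auxSetIntegralCLM_apply]
  obtain ⟨f', hf'_fsm, hff'⟩ := (L1.integrable_coeFn f).aefinStronglyMeasurable
  obtain ⟨F, hF_meas, hf'F, hF_sig⟩ := hf'_fsm.exists_set_sigmaFinite
  have hf'_meas : Measurable f' := hf'_fsm.stronglyMeasurable.measurable
  set ν := μ.restrict F with hν
  haveI : SFinite ν := by haveI := hF_sig; infer_instance
  have hInt_f' : Integrable f' μ := (L1.integrable_coeFn f).congr hff'
  have hInt_f'ν : Integrable f' ν := hInt_f'.restrict
  obtain ⟨u, hu_fsm, hTu⟩ := (L1.integrable_coeFn (T f)).aefinStronglyMeasurable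
  obtain ⟨G, hG_meas, huG, hG_sig⟩ := hu_fsm.exists_set_sigmaFinite
  choose k' hk'_fsm hk'_ae using fun i : Fin n =>
    (memLp_one_iff_integrable.mp (hky (e i))).aefinStronglyMeasurable
  choose G' hG'_meas hk'G' hG'_sig using fun i => (hk'_fsm i).exists_set_sigmaFinite
  have hk'_meas : ∀ i, Measurable (k' i) := fun i => (hk'_fsm i).stronglyMeasurable.measurable
  set E' : Set X := G ∪ ⋃ i, G' i with hE'
  have hE'_meas : MeasurableSet E' := hG_meas.union (MeasurableSet.iUnion hG'_meas)
  haveI hsf' : SFinite (μ.restrict E') :=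
    aux_sfinite_union (by haveI := hG_sig; infer_instance)
      (aux_sfinite_iUnion _ fun i => by haveI := hG'_sig i; infer_instance)
  set κ : X → X → ℝ := fun x y => ∑ i : Fin n, (A i).indicator (fun _ => k' i x) y with hκ
  set W : X → X → ℝ := fun x y => (k x y - κ x y) * f' y with hW
  set v : X → ℝ := fun x => ∑ i : Fin n, (∫ y in A i, f y ∂μ) * k' i x with hv
  have hκxmeas : ∀ x, Measurable (fun y => κ x y) :=
    fun x => Finset.measurable_sum _ fun i _ =>
      (measurable_const.indicator (hA_meas i))
  have hκmeas : Measurable (fun p : X × X => κ p.1 p.2) := by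
    refine Finset.measurable_sum _ fun i _ => ?_
    have : (fun p : X × X => (A i).indicator (fun _ => k' i p.1) p.2)
        = fun p : X × X => if p.2 ∈ A i then k' i p.1 else 0 := by
      funext p; rw [Set.indicator_apply]
    rw [this]
    exact Measurable.ite (measurable_snd (hA_meas i)) ((hk'_meas i).comp measurable_fst)
      measurable_const
  have hmeasW : Measurable (Function.uncurry fun x y => ((‖W x y‖₊ : ℝ≥0∞))) := by
    have : Function.uncurry (fun x y => ((‖W x y‖₊ : ℝ≥0∞)))
        = fun p : X × X => ((‖(k p.1 p.2 - κ p.1 p.2) * f' p.2‖₊ : ℝ≥0∞)) := rfl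
    rw [this]
    exact ((hk.sub hκmeas).mul (hf'_meas.comp measurable_snd)).enorm
  -- coeFn of S f
  have hSf : ⇑(S f) =ᵐ[μ] v := by
    rw [hSapp]
    refine (aux_coeFn_sum Finset.univ _).trans ?_
    filter_upwards [ae_all_iff.mpr
        (fun i : Fin n => Lp.coeFn_smul (∫ y in A i, f y ∂μ) (Φ (e i))),
      ae_all_iff.mpr (fun i : Fin n => hΦ (e i)),
      ae_all_iff.mpr hk'_ae] with x H1 H2 H3
    rw [hv]
    refine Finset.sum_congr rfl fun i _ => ?_
    rw [H1 i, Pi.smul_apply, smul_eq_mul, H2 i, H3 i]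
  -- the pointwise formula for u
  have hu_eq : ∀ᵐ x ∂μ, u x = ∫ y, k x y * f' y ∂ν := by
    filter_upwards [hTu, hT f] with x h1 h2
    rw [← h1, h2]
    have e1 : ∫ y, k x y * f y ∂μ = ∫ y, k x y * f' y ∂μ :=
      integral_congr_ae (hff'.mono fun y hy => by dsimp only; rw [hy])
    have e2 : ∫ y in F, k x y * f' y ∂μ = ∫ y, k x y * f' y ∂μ :=
      setIntegral_eq_integral_of_forall_compl_eq_zero fun y hy => by
        rw [hf'F y hy, mul_zero]
    rw [e1, ← e2]
  -- set integrals over ν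
  have hci : ∀ i, ∫ y in A i, f y ∂μ = ∫ y in A i, f' y ∂ν := by
    intro i
    have hind : F.indicator f' = f' := by
      funext y
      by_cases hy : y ∈ F
      · simp [Set.indicator_of_mem hy]
      · simp [Set.indicator_of_notMem hy, hf'F y hy]
    have e1 : ∫ y in A i, f y ∂μ = ∫ y in A i, f' y ∂μ :=
      integral_congr_ae (ae_restrict_of_ae hff')
    have e2 : ∫ y in A i, f' y ∂ν = ∫ y in A i ∩ F, f' y ∂μ := by
      rw [hν, Measure.restrict_restrict (hA_meas i)]
    have e3 : ∫ y in A i, f' y ∂μ = ∫ y in A i ∩ F, f' y ∂μ := by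
      conv_lhs => rw [← hind]
      exact setIntegral_indicator hF_meas
    rw [e1, e2, e3]
  -- integrability of the κ part
  have hκsum : ∀ x, (fun y => κ x y * f' y)
      = fun y => ∑ i : Fin n, (A i).indicator (fun z => k' i x * f' z) y := by
    intro x
    funext y
    rw [hκ, Finset.sum_mul]
    refine Finset.sum_congr rfl fun i _ => ?_
    by_cases hy : y ∈ A i
    · simp [Set.indicator_of_mem hy]
    · simp [Set.indicator_of_notMem hy]
  have hκint : ∀ x, Integrable (fun y => κ x y * f' y) ν := by
    intro x
    rw [hκsum x]
    exact integrable_finset_sum _ fun i _ => ((hInt_f'ν.const_mul _).indicator (hA_meas i))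
  -- v as an integral
  have hv_eq : ∀ x, v x = ∫ y, κ x y * f' y ∂ν := by
    intro x
    rw [hκsum x, integral_finset_sum _
      (fun i _ => ((hInt_f'ν.const_mul _).indicator (hA_meas i))), hv]
    refine Finset.sum_congr rfl fun i _ => ?_
    rw [integral_indicator (hA_meas i), integral_const_mul, ← hci i, mul_comm]
  -- the pointwise bound
  have hbound : ∀ᵐ x ∂μ, (‖u x - v x‖₊ : ℝ≥0∞) ≤ ∫⁻ y, ‖W x y‖₊ ∂ν := by
    filter_upwards [hu_eq] with x hux
    by_cases hxint : Integrable (fun y => k x y * f' y) ν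
    · have huv : u x - v x = ∫ y, W x y ∂ν := by
        rw [hux, hv_eq x, ← integral_sub hxint (hκint x)]
        congr 1
        funext y
        simp only [hW]; ring
      rw [huv]
      exact enorm_integral_le_lintegral_enorm _
    · have hWnint : ¬ Integrable (fun y => W x y) ν := by
        intro hcon
        apply hxint
        have : (fun y => k x y * f' y) = fun y => W x y + κ x y * f' y := by
          funext y; simp only [hW]; ring
        rw [this]
        exact hcon.add (hκint x)
      have htop : ∫⁻ y, (‖W x y‖₊ : ℝ≥0∞) ∂ν = ∞ := by
        by_contra hfin
        exact hWnint ⟨(((hk.comp measurable_prodMk_left).sub (hκxmeas x)).mul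
          hf'_meas).aestronglyMeasurable, lt_top_iff_ne_top.mpr hfin⟩
      rw [htop]
      exact le_top
  -- support of u - v
  have hsupp : ∀ x, x ∉ E' → u x - v x = 0 := by
    intro x hx
    rw [hE'] at hx
    simp only [Set.mem_union, Set.mem_iUnion, not_or, not_exists] at hx
    rw [huG x hx.1, hv]
    simp only [hk'G' _ x (hx.2 _), mul_zero, Finset.sum_const_zero, sub_zero]
  -- per-y bound
  have hy_bound : ∀ y, ∫⁻ x in E', (‖W x y‖₊ : ℝ≥0∞) ∂μ
      ≤ ENNReal.ofReal ε * ‖f' y‖₊ := by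
    intro y
    obtain ⟨i, hiy⟩ := hA_cover y
    have hκy : ∀ x, κ x y = k' i x := by
      intro x
      simp only [hκ]
      rw [Finset.sum_eq_single i]
      · rw [Set.indicator_of_mem hiy]
      · intro j _ hji
        exact Set.indicator_of_notMem (fun hyj => hji (hA_unique y j i hyj hiy)) _
      · intro hni; exact absurd (Finset.mem_univ i) hni
    have hinner : ∫⁻ x in E', (‖k x y - k' i x‖₊ : ℝ≥0∞) ∂μ ≤ ENNReal.ofReal ε := by
      calc ∫⁻ x in E', (‖k x y - k' i x‖₊ : ℝ≥0∞) ∂μ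
          ≤ ∫⁻ x, (‖k x y - k' i x‖₊ : ℝ≥0∞) ∂μ := setLIntegral_le_lintegral _ _
      _ = ∫⁻ x, (‖k x y - k x (e i)‖₊ : ℝ≥0∞) ∂μ := by
          refine lintegral_congr_ae ?_
          filter_upwards [hk'_ae i] with x hx
          rw [hx]
      _ = d i y := hd_eq i y
      _ ≤ ENNReal.ofReal ε := (hA_lt i y hiy).le
    calc ∫⁻ x in E', (‖W x y‖₊ : ℝ≥0∞) ∂μ
        = ∫⁻ x in E', (‖k x y - k' i x‖₊ : ℝ≥0∞) * ‖f' y‖₊ ∂μ := by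
          refine lintegral_congr fun x => ?_
          simp only [hW]
          rw [hκy x, nnnorm_mul, ENNReal.coe_mul]
    _ = (∫⁻ x in E', (‖k x y - k' i x‖₊ : ℝ≥0∞) ∂μ) * ‖f' y‖₊ :=
          lintegral_mul_const _
            (((hk.comp (measurable_id.prodMk measurable_const)).sub (hk'_meas i)).enorm)
    _ ≤ ENNReal.ofReal ε * ‖f' y‖₊ := mul_le_mul_left hinner _
  -- main chain
  have key : eLpNorm (⇑(T f - S f)) 1 μ ≤ ENNReal.ofReal ε * eLpNorm (⇑f) 1 μ := by
    have e0 : eLpNorm (⇑(T f - S f)) 1 μ = ∫⁻ x, ‖u x - v x‖₊ ∂μ := by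
      rw [eLpNorm_congr_ae ((Lp.coeFn_sub (T f) (S f)).trans (hTu.sub hSf)),
        eLpNorm_one_eq_lintegral_enorm]; rfl
    have e1 : ∫⁻ x, (‖u x - v x‖₊ : ℝ≥0∞) ∂μ = ∫⁻ x in E', ‖u x - v x‖₊ ∂μ := by
      rw [← lintegral_add_compl (fun x => (‖u x - v x‖₊ : ℝ≥0∞)) hE'_meas]
      have hz : ∫⁻ x in E'ᶜ, (‖u x - v x‖₊ : ℝ≥0∞) ∂μ = 0 := by
        have : ∀ᵐ x ∂(μ.restrict E'ᶜ), (‖u x - v x‖₊ : ℝ≥0∞) = 0 := by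
          refine (ae_restrict_iff' hE'_meas.compl).mpr (ae_of_all _ fun x hx => ?_)
          rw [hsupp x hx]
          simp
        rw [lintegral_congr_ae this, lintegral_zero]
      rw [hz, add_zero]
    rw [e0, e1]
    calc ∫⁻ x in E', (‖u x - v x‖₊ : ℝ≥0∞) ∂μ
        ≤ ∫⁻ x in E', (∫⁻ y, ‖W x y‖₊ ∂ν) ∂μ := lintegral_mono_ae (ae_restrict_of_ae hbound)
    _ = ∫⁻ y, (∫⁻ x in E', ‖W x y‖₊ ∂μ) ∂ν := lintegral_lintegral_swap hmeasW.aemeasurable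
    _ ≤ ∫⁻ y, ENNReal.ofReal ε * ‖f' y‖₊ ∂ν := lintegral_mono fun y => hy_bound y
    _ = ENNReal.ofReal ε * ∫⁻ y, ‖f' y‖₊ ∂ν := lintegral_const_mul _ hf'_meas.enorm
    _ ≤ ENNReal.ofReal ε * ∫⁻ y, ‖f' y‖₊ ∂μ :=
        mul_le_mul_right (setLIntegral_le_lintegral _ _) _
    _ = ENNReal.ofReal ε * eLpNorm (⇑f) 1 μ := by
        rw [eLpNorm_one_eq_lintegral_enorm]
        congr 1
        refine lintegral_congr_ae ?_
        filter_upwards [hff'] with y hy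
        rw [hy]; rfl
  calc ‖T f - S f‖ = (eLpNorm (⇑(T f - S f)) 1 μ).toReal := by rw [Lp.norm_def]
  _ ≤ (ENNReal.ofReal ε * eLpNorm (⇑f) 1 μ).toReal :=
      ENNReal.toReal_mono (ENNReal.mul_ne_top ENNReal.ofReal_ne_top (Lp.eLpNorm_ne_top f)) key
  _ = ε * ‖f‖ := by rw [ENNReal.toReal_mul, ENNReal.toReal_ofReal hε.le, Lp.norm_def]


/-- Eveson's criterion: if the kernel slices k_y are uniformly integrable against μ
(y ↦ ∫|k(x,y)|dμ(x) essentially bounded) and {k_y : y ∈ X} is relatively compact in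
L¹(X,μ), then the integral operator Kf(x) = ∫ k(x,y)f(y) dμ(y) is compact on L¹. -/
theorem stmt10 {X : Type*} [MeasurableSpace X] (μ : Measure X)
    (k : X → X → ℝ) (hk : Measurable (Function.uncurry k))
    (hky : ∀ y : X, MemLp (fun x => k x y) 1 μ)
    (M : ℝ) (hM : ∀ᵐ y ∂μ, ∫ x, |k x y| ∂μ ≤ M)
    (hcpt : IsCompact (closure {g : Lp ℝ 1 μ | ∃ y : X, (hky y).toLp (fun x => k x y) = g}))
    (T : Lp ℝ 1 μ →L[ℝ] Lp ℝ 1 μ)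
    (hT : ∀ f : Lp ℝ 1 μ, (T f : X → ℝ) =ᵐ[μ] fun x => ∫ y, k x y * f y ∂μ) :
    IsCompactOperator T := by
  have happrox : ∀ m : ℕ, ∃ S : Lp ℝ 1 μ →L[ℝ] Lp ℝ 1 μ,
      IsCompactOperator S ∧ ∀ f, ‖T f - S f‖ ≤ (1 / (m + 1)) * ‖f‖ := fun m =>
    aux_approx μ k hk hky hcpt T hT (by positivity)
  choose Sn hSn_cpt hSn_bound using happrox
  have hdist : ∀ m : ℕ, dist (Sn m) T ≤ 1 / (m + 1) := by
    intro m
    rw [dist_eq_norm]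
    refine ContinuousLinearMap.opNorm_le_bound _ (by positivity) fun f => ?_
    have : (Sn m - T) f = -(T f - Sn m f) := by
      simp [ContinuousLinearMap.sub_apply, neg_sub]
    rw [this, norm_neg]
    exact hSn_bound m f
  have htend : Filter.Tendsto Sn Filter.atTop (nhds T) := by
    rw [tendsto_iff_dist_tendsto_zero]
    refine squeeze_zero (fun m => dist_nonneg) hdist ?_
    exact tendsto_one_div_add_atTop_nhds_zero_nat
  exact isCompactOperator_of_tendsto htend (Filter.Eventually.of_forall hSn_cpt)
end

section
/- Let A be a bounded linear operator on L¹(X,μ) for a finite measure μ, and suppose there is ε > 0 such that for every p ∈ [1, ∞), A maps Lᵖ(X,μ) boundedly into L^{p+ε}(X,μ). If f ∈ L¹(X,μ) satisfies Af = f, then f ∈ Lᵖ(X,μ) for every p < ∞; in particular f ∈ L²(X,μ). -/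
open MeasureTheory ENNReal

/-- Bootstrapping: if A is bounded on L¹(X,μ) (μ finite) and improves integrability,
mapping Lᵖ into L^{p+ε} for every p ∈ [1,∞), then any fixed point f ∈ L¹ of A lies in
Lᵖ for every p < ∞; in particular f ∈ L². -/
theorem stmt14 {X : Type*} [MeasurableSpace X] (μ : Measure X) [IsFiniteMeasure μ]
    (A : (X → ℝ) → (X → ℝ))
    (hbdd : ∃ C : ℝ, ∀ f : X → ℝ, Integrable f μ →
      Integrable (A f) μ ∧ ∫ x, |A f x| ∂μ ≤ C * ∫ x, |f x| ∂μ)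
    (ε : ℝ) (hε : 0 < ε)
    (hsmooth : ∀ p : ℝ, 1 ≤ p → ∀ f : X → ℝ, MemLp f (ENNReal.ofReal p) μ →
      MemLp (A f) (ENNReal.ofReal (p + ε)) μ)
    (f : X → ℝ) (hf : Integrable f μ) (hfix : A f = f) :
    (∀ p : ℝ, 1 ≤ p → MemLp f (ENNReal.ofReal p) μ) ∧ MemLp f 2 μ := by
  have key : ∀ n : ℕ, MemLp f (ENNReal.ofReal (1 + n * ε)) μ := by
    intro n
    induction n with
    | zero =>
      simpa [ENNReal.ofReal_one, ← memLp_one_iff_integrable] using hf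
    | succ n ih =>
      have hn0 : (0 : ℝ) ≤ n * ε := by positivity
      have h1 : (1 : ℝ) ≤ 1 + n * ε := by linarith
      have h2 := hsmooth (1 + n * ε) h1 f ih
      rw [hfix] at h2
      have heq : (1 : ℝ) + n * ε + ε = 1 + (n + 1 : ℕ) * ε := by push_cast; ring
      rwa [heq] at h2
  have main : ∀ p : ℝ, 1 ≤ p → MemLp f (ENNReal.ofReal p) μ := by
    intro p hp
    obtain ⟨n, hn⟩ := Archimedean.arch (p - 1) hε
    have hle : p ≤ 1 + n * ε := by
      have : p - 1 ≤ n * ε := by simpa [nsmul_eq_mul] using hn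
      linarith
    exact (key n).mono_exponent (ENNReal.ofReal_le_ofReal hle)
  refine ⟨main, ?_⟩
  have h2 := main 2 (by norm_num)
  simpa [ENNReal.ofReal_ofNat] using h2
end

section
/- Let (X, d, μ) be a space of homogeneous type with quasi-triangle constant c, and suppose g : X × X → ℂ satisfies: (i) |g(z,w)| ≈ |g(z,w')| whenever d(w,w') ≤ C·d(z,w) for a fixed constant C > 0, and (ii) |g(z,w) − g(z,w')| ≲ d(w,w')^{1/2} d(z,w)^{1/2} + d(w,w'), and (iii) d(w, bD) ≲ |g(z,w)| for all z, w (where d(w,bD) denotes a fixed 'distance to boundary' function satisfying d(w,bD) ≤ c·d(w,w') + c·d(w',bD)). Then there exists k > 0 such that |g(z,w)| ≈ |g(z,w')| for all z, w, w' with d(w,w') ≤ k·d(w,bD). -/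
/-- The kernel denominator g(z,w) is essentially constant when w moves within a small
quasi-ball of radius proportional to its distance to the boundary. -/
theorem stmt16 {X : Type*} (d : X → X → ℝ) (c : ℝ) (hc : 1 ≤ c)
    (hd0 : ∀ x y, 0 ≤ d x y) (hsymm : ∀ x y, d x y = d y x)
    (htri : ∀ x y z, d x z ≤ c * d x y + c * d y z)
    (db : X → ℝ) (hdb0 : ∀ x, 0 ≤ db x)
    (hdbtri : ∀ w w' : X, db w ≤ c * d w w' + c * db w')
    (g : X → X → ℂ)
    (C : ℝ) (hC : 0 < C) (A₁ : ℝ) (hA₁ : 0 < A₁)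
    (h1 : ∀ z w w' : X, d w w' ≤ C * d z w →
      ‖g z w‖ ≤ A₁ * ‖g z w'‖ ∧
      ‖g z w'‖ ≤ A₁ * ‖g z w‖)
    (A₂ : ℝ) (hA₂ : 0 < A₂)
    (h2 : ∀ z w w' : X, ‖g z w - g z w'‖ ≤
      A₂ * (Real.sqrt (d w w') * Real.sqrt (d z w) + d w w'))
    (A₃ : ℝ) (hA₃ : 0 < A₃)
    (h3 : ∀ z w : X, db w ≤ A₃ * ‖g z w‖) :
    ∃ k : ℝ, 0 < k ∧ ∃ A : ℝ, 0 < A ∧ ∀ z w w' : X, d w w' ≤ k * db w →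
      ‖g z w‖ ≤ A * ‖g z w'‖ ∧
      ‖g z w'‖ ≤ A * ‖g z w‖ := by
  set s := Real.sqrt C with hs
  have hspos : 0 < s := Real.sqrt_pos.mpr hC
  set M := A₂ * A₃ * (1 / s + 1) with hM
  have hMpos : 0 < M := by positivity
  refine ⟨1 / (2 * M), by positivity, max A₁ 2, lt_max_of_lt_right two_pos, ?_⟩
  intro z w w' hww'
  rcases le_or_gt (d w w') (C * d z w) with hcase | hcase
  · obtain ⟨ha, hb⟩ := h1 z w w' hcase
    constructor
    · exact ha.trans (mul_le_mul_of_nonneg_right (le_max_left _ _) (norm_nonneg _))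
    · exact hb.trans (mul_le_mul_of_nonneg_right (le_max_left _ _) (norm_nonneg _))
  · -- d z w < d w w' / C
    have hzw : d z w ≤ d w w' / C := by
      rw [le_div_iff₀ hC]; nlinarith [hcase]
    have hsq : Real.sqrt (d z w) ≤ Real.sqrt (d w w') / s := by
      rw [hs, ← Real.sqrt_div (hd0 w w')]
      exact Real.sqrt_le_sqrt hzw
    have hkey : Real.sqrt (d w w') * Real.sqrt (d z w) ≤ d w w' / s := by
      calc Real.sqrt (d w w') * Real.sqrt (d z w)
          ≤ Real.sqrt (d w w') * (Real.sqrt (d w w') / s) :=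
            mul_le_mul_of_nonneg_left hsq (Real.sqrt_nonneg _)
        _ = d w w' / s := by
            rw [mul_div_assoc', Real.mul_self_sqrt (hd0 w w')]
    have hdiff : ‖g z w - g z w'‖ ≤ A₂ * (1 / s + 1) * d w w' := by
      calc ‖g z w - g z w'‖
          ≤ A₂ * (Real.sqrt (d w w') * Real.sqrt (d z w) + d w w') := h2 z w w'
        _ ≤ A₂ * (d w w' / s + d w w') := by
            apply mul_le_mul_of_nonneg_left _ hA₂.le
            linarith
        _ = A₂ * (1 / s + 1) * d w w' := by ring
    have hdb : d w w' ≤ 1 / (2 * M) * (A₃ * ‖g z w‖) := by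
      refine hww'.trans ?_
      exact mul_le_mul_of_nonneg_left (h3 z w) (by positivity)
    have hhalf : ‖g z w - g z w'‖ ≤ (1 / 2) * ‖g z w‖ := by
      have := hdiff.trans (mul_le_mul_of_nonneg_left hdb (by positivity : (0:ℝ) ≤ A₂ * (1 / s + 1)))
      calc ‖g z w - g z w'‖
          ≤ A₂ * (1 / s + 1) * (1 / (2 * M) * (A₃ * ‖g z w‖)) := this
        _ = M * (1 / (2 * M)) * ‖g z w‖ := by rw [hM]; ring
        _ = (1 / 2) * ‖g z w‖ := by
            rw [mul_one_div, mul_comm 2 M, ← div_div, div_self hMpos.ne']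
    have t1 := norm_sub_norm_le (g z w) (g z w')
    have t2 := norm_sub_norm_le (g z w') (g z w)
    rw [norm_sub_rev] at t2
    have h2le : (2:ℝ) ≤ max A₁ 2 := le_max_right _ _
    have hnn := norm_nonneg (g z w')
    constructor
    · nlinarith
    · nlinarith
end
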